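/- For the elementary symmetric polynomial E_m on ℝ^m and a direction d ∈ ℝ^m with all positive entries, the k-th directional derivative along d satisfies E_m^{(k)}(x) = k! · E_m(d) · E_{m−k}(x./d), where x./d denotes the componentwise quotient. -/

import Mathlib

open Polynomial Finset

lemma iteratedDeriv_polynomial (k : ℕ) (p : ℝ[X]) :
    iteratedDeriv k (fun t => p.eval t) = fun t => ((derivative)^[k] p).eval t := by
  induction k generalizing p with
  | zero => simp
  | succ k ih =>
      rw [iteratedDeriv_succ', Function.iterate_succ_apply]
      rw [← ih p.derivative]
      have hder : (deriv fun t : ℝ => p.eval t) = fun t => p.derivative.eval t := by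
        funext t
        exact Polynomial.deriv (p := p) (x := t)
      rw [hder]


/-- For `E_m(x) = ∏ i, x i` on `ℝ^m` and a direction `d` with all
positive entries, the `k`-th directional derivative along `d` satisfies
`E_m^{(k)}(x) = k! * E_m(d) * E_{m−k}(x ./ d)` (componentwise quotient). -/
theorem iteratedDeriv_prod_add_dir (m k : ℕ) (hk : k ≤ m)
    (d : Fin m → ℝ) (hd : ∀ i, 0 < d i) (x : Fin m → ℝ) :
    iteratedDeriv k (fun t : ℝ => ∏ i, (x i + t * d i)) 0
      = (k.factorial : ℝ) * (∏ i, d i) *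
        ∑ s ∈ Finset.powersetCard (m - k) (Finset.univ : Finset (Fin m)),
          ∏ i ∈ s, x i / d i := by
  set p : ℝ[X] := ∏ i, (C (x i) + C (d i) * X) with hp
  have hfun : (fun t : ℝ => ∏ i, (x i + t * d i))
      = fun t => p.eval t := by
    funext t
    rw [hp, Polynomial.eval_prod]
    exact Finset.prod_congr rfl fun i _ => by simp; ring
  rw [hfun, iteratedDeriv_polynomial]
  show ((derivative)^[k] p).eval 0 = _
  rw [← Polynomial.coeff_zero_eq_eval_zero, coeff_iterate_derivative]
  simp only [zero_add, Nat.descFactorial_self, smul_eq_mul, nsmul_eq_mul]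
  -- compute coeff k of p
  have hpsum : p = ∑ t ∈ (univ : Finset (Fin m)).powerset,
      C ((∏ i ∈ t, x i) * ∏ i ∈ univ \ t, d i) * X ^ (m - t.card) := by
    rw [hp, Finset.prod_add]
    refine Finset.sum_congr rfl fun t ht => ?_
    rw [Finset.prod_mul_distrib, Finset.prod_const,
      Finset.card_sdiff_of_subset (Finset.mem_powerset.mp ht), Finset.card_univ, Fintype.card_fin]
    simp [← map_prod, mul_assoc]
  rw [hpsum, Polynomial.finset_sum_coeff]
  simp only [Polynomial.coeff_C_mul, Polynomial.coeff_X_pow]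
  -- only subsets with card = m - k contribute
  classical
  have step : (∑ t ∈ (univ : Finset (Fin m)).powerset,
      ((∏ i ∈ t, x i) * ∏ i ∈ univ \ t, d i) * (if k = m - t.card then (1:ℝ) else 0))
      = ∑ t ∈ Finset.powersetCard (m - k) (univ : Finset (Fin m)),
          (∏ i ∈ t, x i) * ∏ i ∈ univ \ t, d i := by
    rw [Finset.powersetCard_eq_filter, Finset.sum_filter]
    refine Finset.sum_congr rfl fun t ht => ?_
    have hc := Finset.card_le_card (Finset.mem_powerset.mp ht)
    rw [Finset.card_univ, Fintype.card_fin] at hc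
    have hiff : (k = m - t.card) ↔ (t.card = m - k) := by omega
    rw [mul_ite, mul_one, mul_zero]
    simp [hiff]
  rw [step]
  rw [mul_assoc]
  rw [Finset.mul_sum (Finset.powersetCard (m - k) (Finset.univ : Finset (Fin m))) (fun s => ∏ i ∈ s, x i / d i) ((∏ i, d i) : ℝ)]
  congr 1
  refine Finset.sum_congr rfl fun t ht => ?_
  obtain ⟨hsub, hcard⟩ := Finset.mem_powersetCard.mp ht
  have hsplit : (∏ i, d i) = (∏ i ∈ t, d i) * ∏ i ∈ univ \ t, d i := by
    rw [← Finset.prod_union Finset.disjoint_sdiff, Finset.union_sdiff_of_subset hsub]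
  rw [Finset.prod_div_distrib, hsplit]
  have hdt : (∏ i ∈ t, d i) ≠ 0 := Finset.prod_ne_zero_iff.mpr fun i _ => (hd i).ne'
  field_simp
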